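/- Let ν₁, ν₂, ν₃ be integers with ν₂ > ν₁ > ν₃, and set λ = ν₁ − ν₃ + 1. Then the solution space of the system S(λ,ν) equals the span of the two functions w₀, w₁ : ℤ → ℂ defined as follows, where Γ denotes the complex Gamma function and ε ∈ {0,1} is chosen with ε ≡ ν₁−ν₂+1 (mod 2): w₀(q) = Γ((ν₁−ν₂+1+q)/2) / ( Γ((ν₂−ν₁+1+q)/2) · (λ+q)! · (λ−q)! ) if |q| ≤ λ and q ≡ ν₁−ν₂ (mod 2), and w₀(q) = 0 otherwise; w₁(q) = (−1)^{(q−ε)/2} / ( Γ((ν₂−ν₁+1−q)/2) · Γ((ν₂−ν₁+1+q)/2) · (λ+q)! · (λ−q)! ) if |q| ≤ λ and q ≡ ν₁−ν₂+1 (mod 2), and w₁(q) = 0 otherwise. Here 1/Γ(z) is taken to be 0 when z is a nonpositive integer (this agrees with Mathlib's convention, since Mathlib's Gamma function vanishes at nonpositive integers); the Gamma arguments in w₀ are half-integers, so no poles occur there. -/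

import Mathlib

/-- A function `c : ℤ → ℂ` is a solution of the system `S(λ,ν)`:
it vanishes for `|q| > λ`, and satisfies the two families of equations (E1) and (E2). -/
def IsSolS (lam : ℤ) (ν₁ ν₂ ν₃ : ℂ) (c : ℤ → ℂ) : Prop :=
  (∀ q : ℤ, lam < |q| → c q = 0) ∧
  (∀ q : ℤ, -lam + 2 ≤ q → q ≤ lam - 1 →
    ((lam : ℂ) - (q : ℂ) + 2) * ((lam : ℂ) - (q : ℂ) + 1) * (ν₁ - ν₂ + (q : ℂ) - 1) * c (q - 2)
      - ((lam : ℂ) + (q : ℂ)) * ((lam : ℂ) + (q : ℂ) - 1) *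
          (ν₁ + ν₂ - 2 * ν₃ - 2 * (lam : ℂ) + (q : ℂ) + 1) * c q = 0) ∧
  (∀ q : ℤ, -lam + 1 ≤ q → q ≤ lam - 2 →
    ((lam : ℂ) - (q : ℂ)) * ((lam : ℂ) - (q : ℂ) - 1) *
        (ν₁ + ν₂ - 2 * ν₃ - 2 * (lam : ℂ) - (q : ℂ) + 1) * c q
      - ((lam : ℂ) + (q : ℂ) + 2) * ((lam : ℂ) + (q : ℂ) + 1) * (ν₁ - ν₂ - (q : ℂ) - 1) *
          c (q + 2) = 0)

/-- The solution `w₀` (supported on `q ≡ ν₁−ν₂ (mod 2)`, `|q| ≤ λ`), where `λ = ν₁−ν₃+1`. -/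
noncomputable def solW0 (ν₁ ν₂ ν₃ : ℤ) : ℤ → ℂ := fun q =>
  if |q| ≤ ν₁ - ν₃ + 1 ∧ (q - (ν₁ - ν₂)) % 2 = 0 then
    Complex.Gamma (((ν₁ - ν₂ + 1 + q : ℤ) : ℂ) / 2)
      / (Complex.Gamma (((ν₂ - ν₁ + 1 + q : ℤ) : ℂ) / 2)
          * (Nat.factorial (ν₁ - ν₃ + 1 + q).toNat : ℂ)
          * (Nat.factorial (ν₁ - ν₃ + 1 - q).toNat : ℂ))
  else 0

/-- The solution `w₁` (supported on `q ≡ ν₁−ν₂+1 (mod 2)`, `|q| ≤ λ`), where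
`λ = ν₁−ν₃+1` and `ε = (ν₁−ν₂+1) % 2 ∈ {0,1}`.  Division by a product containing a
vanishing value of `Complex.Gamma` (at a nonpositive integer) yields `0`. -/
noncomputable def solW1 (ν₁ ν₂ ν₃ : ℤ) : ℤ → ℂ := fun q =>
  if |q| ≤ ν₁ - ν₃ + 1 ∧ (q - (ν₁ - ν₂ + 1)) % 2 = 0 then
    (-1 : ℂ) ^ ((q - (ν₁ - ν₂ + 1) % 2) / 2)
      / (Complex.Gamma (((ν₂ - ν₁ + 1 - q : ℤ) : ℂ) / 2)
          * Complex.Gamma (((ν₂ - ν₁ + 1 + q : ℤ) : ℂ) / 2)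
          * (Nat.factorial (ν₁ - ν₃ + 1 + q).toNat : ℂ)
          * (Nat.factorial (ν₁ - ν₃ + 1 - q).toNat : ℂ))
  else 0

/- ### Auxiliary lemmas -/

lemma gamma_int_ne_zero' (k : ℤ) (hk : 0 < k) : Complex.Gamma (k : ℂ) ≠ 0 := by
  apply Complex.Gamma_ne_zero
  intro n h
  have h2 : (k : ℂ) = ((-(n:ℤ) : ℤ) : ℂ) := by push_cast; exact h
  have := Int.cast_injective (α := ℂ) h2
  omega

lemma gamma_int_nonpos_eq_zero' (k : ℤ) (hk : k ≤ 0) : Complex.Gamma (k:ℂ) = 0 := by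
  obtain ⟨n, rfl⟩ : ∃ n : ℕ, k = -(n:ℤ) := ⟨(-k).toNat, by omega⟩
  have := Complex.Gamma_neg_nat_eq_zero n
  simpa using this

lemma half_cast' (k : ℤ) (h : k % 2 = 0) : ((k:ℤ):ℂ)/2 = ((k/2 : ℤ) : ℂ) := by
  obtain ⟨j, rfl⟩ : ∃ j, k = 2*j := ⟨k/2, by omega⟩
  rw [show (2*j)/2 = j from by omega]
  push_cast; ring

lemma gamma_half_even_ne_zero (k : ℤ) (h : k % 2 = 0) (hk : 0 < k) :
    Complex.Gamma ((k:ℂ)/2) ≠ 0 := by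
  rw [half_cast' k h]; exact gamma_int_ne_zero' _ (by omega)

lemma gamma_half_even_eq_zero (k : ℤ) (h : k % 2 = 0) (hk : k ≤ 0) :
    Complex.Gamma ((k:ℂ)/2) = 0 := by
  rw [half_cast' k h]; exact gamma_int_nonpos_eq_zero' _ (by omega)

lemma gamma_half_odd_ne_zero (k : ℤ) (h : k % 2 ≠ 0) : Complex.Gamma ((k:ℂ)/2) ≠ 0 := by
  apply Complex.Gamma_ne_zero
  intro n hn
  have h2 : (k : ℂ) = ((-2*(n:ℤ) : ℤ) : ℂ) := by
    push_cast
    field_simp at hn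
    linear_combination hn
  have := Int.cast_injective (α := ℂ) h2
  omega

lemma gamma_step (k : ℤ) (hk : k ≠ 0) :
    Complex.Gamma (((k+2 : ℤ):ℂ)/2) = ((k:ℂ)/2) * Complex.Gamma ((k:ℂ)/2) := by
  have hne : ((k:ℂ))/2 ≠ 0 := by
    apply div_ne_zero _ two_ne_zero
    exact_mod_cast hk
  have h := Complex.Gamma_add_one _ hne
  rw [show (((k+2:ℤ)):ℂ)/2 = (k:ℂ)/2 + 1 by push_cast; ring, h]

lemma fact_cast_step (a : ℤ) (h : 0 ≤ a) :
    ((Nat.factorial (a+2).toNat : ℕ) : ℂ) = ((a:ℂ)+2)*((a:ℂ)+1)*(Nat.factorial a.toNat : ℂ) := by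
  lift a to ℕ using h with n
  rw [show ((n:ℤ)+2).toNat = n + 2 from by omega, show ((n:ℤ)).toNat = n from by omega]
  push_cast [Nat.factorial_succ]
  ring

lemma ezero (A : ℤ) (x : ℂ) (hA : A ≠ 0) (h : (A:ℂ) * x = 0) : x = 0 :=
  (mul_eq_zero.mp h).resolve_left (Int.cast_ne_zero.mpr hA)

/- ### Vanishing of w₀, w₁ outside `|q| ≤ λ` -/

lemma w0_vanish (ν₁ ν₂ ν₃ : ℤ) (q : ℤ) (h : ν₁ - ν₃ + 1 < |q|) : solW0 ν₁ ν₂ ν₃ q = 0 := by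
  unfold solW0
  rw [if_neg (fun hh => absurd hh.1 (not_le.mpr h))]

lemma w1_vanish (ν₁ ν₂ ν₃ : ℤ) (q : ℤ) (h : ν₁ - ν₃ + 1 < |q|) : solW1 ν₁ ν₂ ν₃ q = 0 := by
  unfold solW1
  rw [if_neg (fun hh => absurd hh.1 (not_le.mpr h))]

lemma w1_hi (ν₁ ν₂ ν₃ : ℤ) (q : ℤ) (h : ν₂ - ν₁ + 1 ≤ q) : solW1 ν₁ ν₂ ν₃ q = 0 := by
  unfold solW1
  split
  · next hc =>
    rw [gamma_half_even_eq_zero _ (by omega) (by omega)]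
    simp
  · rfl

lemma w1_lo (ν₁ ν₂ ν₃ : ℤ) (q : ℤ) (h : q ≤ -(ν₂ - ν₁ + 1)) : solW1 ν₁ ν₂ ν₃ q = 0 := by
  unfold solW1
  split
  · next hc =>
    rw [gamma_half_even_eq_zero (ν₂ - ν₁ + 1 + q) (by omega) (by omega)]
    simp
  · rfl

/- ### The two-term recurrence satisfied by w₀ and w₁ -/

lemma stepW0 (ν₁ ν₂ ν₃ : ℤ) (h13 : ν₃ < ν₁) (q : ℤ)
    (hq1 : -(ν₁-ν₃+1)+2 ≤ q) (hq2 : q ≤ ν₁-ν₃+1) :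
    ((ν₁:ℂ)-ν₃+1+q) * ((ν₁:ℂ)-ν₃+q) * ((ν₂:ℂ)-ν₁+q-1) * solW0 ν₁ ν₂ ν₃ q
      = ((ν₁:ℂ)-ν₃+3-q) * ((ν₁:ℂ)-ν₃+2-q) * ((q:ℂ)-1-ν₂+ν₁) * solW0 ν₁ ν₂ ν₃ (q-2) := by
  unfold solW0
  by_cases hp : (q - (ν₁ - ν₂)) % 2 = 0
  · rw [if_pos ⟨abs_le.mpr ⟨by omega, by omega⟩, hp⟩,
        if_pos ⟨abs_le.mpr ⟨by omega, by omega⟩, by omega⟩]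
    have e1 : Complex.Gamma (((ν₁ - ν₂ + 1 + q : ℤ) : ℂ) / 2)
        = (((ν₁ - ν₂ + 1 + (q-2) : ℤ):ℂ)/2) * Complex.Gamma (((ν₁ - ν₂ + 1 + (q-2) : ℤ) : ℂ) / 2) := by
      rw [show (ν₁ - ν₂ + 1 + q : ℤ) = (ν₁ - ν₂ + 1 + (q-2)) + 2 from by ring]
      exact gamma_step _ (by omega)
    have e2 : Complex.Gamma (((ν₂ - ν₁ + 1 + q : ℤ) : ℂ) / 2)
        = (((ν₂ - ν₁ + 1 + (q-2) : ℤ):ℂ)/2) * Complex.Gamma (((ν₂ - ν₁ + 1 + (q-2) : ℤ) : ℂ) / 2) := by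
      rw [show (ν₂ - ν₁ + 1 + q : ℤ) = (ν₂ - ν₁ + 1 + (q-2)) + 2 from by ring]
      exact gamma_step _ (by omega)
    have e3 : ((Nat.factorial (ν₁ - ν₃ + 1 + q).toNat : ℕ) : ℂ)
        = (((ν₁ - ν₃ + 1 + (q-2)):ℂ)+2)*(((ν₁ - ν₃ + 1 + (q-2)):ℂ)+1)
          *(Nat.factorial (ν₁ - ν₃ + 1 + (q-2)).toNat : ℂ) := by
      rw [show (ν₁ - ν₃ + 1 + q : ℤ) = (ν₁ - ν₃ + 1 + (q-2)) + 2 from by ring]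
      have := fact_cast_step (ν₁ - ν₃ + 1 + (q-2)) (by omega)
      rw [this]; push_cast; ring
    have e4 : ((Nat.factorial (ν₁ - ν₃ + 1 - (q-2)).toNat : ℕ) : ℂ)
        = (((ν₁ - ν₃ + 1 - q):ℂ)+2)*(((ν₁ - ν₃ + 1 - q):ℂ)+1)
          *(Nat.factorial (ν₁ - ν₃ + 1 - q).toNat : ℂ) := by
      rw [show (ν₁ - ν₃ + 1 - (q-2) : ℤ) = (ν₁ - ν₃ + 1 - q) + 2 from by ring]
      have := fact_cast_step (ν₁ - ν₃ + 1 - q) (by omega)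
      rw [this]; push_cast; ring
    rw [e1, e2, e3, e4]
    have g2 : Complex.Gamma (((ν₂ - ν₁ + 1 + (q-2) : ℤ) : ℂ) / 2) ≠ 0 :=
      gamma_half_odd_ne_zero _ (by omega)
    have hw : (((ν₂ - ν₁ + 1 + (q-2) : ℤ):ℂ)) ≠ 0 := by
      exact_mod_cast (by omega : (ν₂ - ν₁ + 1 + (q-2) : ℤ) ≠ 0)
    have f1 : ((Nat.factorial (ν₁ - ν₃ + 1 + (q-2)).toNat : ℕ) : ℂ) ≠ 0 :=
      Nat.cast_ne_zero.mpr (Nat.factorial_ne_zero _)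
    have f2 : ((Nat.factorial (ν₁ - ν₃ + 1 - q).toNat : ℕ) : ℂ) ≠ 0 :=
      Nat.cast_ne_zero.mpr (Nat.factorial_ne_zero _)
    have c1 : ((ν₁:ℂ) - ν₃ + 1 + (q-2)) + 2 ≠ 0 := by
      have : (((ν₁ - ν₃ + 1 + q):ℤ):ℂ) ≠ 0 := by
        exact_mod_cast (by omega : (ν₁ - ν₃ + 1 + q : ℤ) ≠ 0)
      push_cast at this ⊢; intro h; apply this; linear_combination h
    have c2 : ((ν₁:ℂ) - ν₃ + 1 + (q-2)) + 1 ≠ 0 := by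
      have : (((ν₁ - ν₃ + q):ℤ):ℂ) ≠ 0 := by
        exact_mod_cast (by omega : (ν₁ - ν₃ + q : ℤ) ≠ 0)
      push_cast at this ⊢; intro h; apply this; linear_combination h
    have c3 : ((ν₁:ℂ) - ν₃ + 1 - q) + 2 ≠ 0 := by
      have : (((ν₁ - ν₃ + 3 - q):ℤ):ℂ) ≠ 0 := by
        exact_mod_cast (by omega : (ν₁ - ν₃ + 3 - q : ℤ) ≠ 0)
      push_cast at this ⊢; intro h; apply this; linear_combination h
    have c4 : ((ν₁:ℂ) - ν₃ + 1 - q) + 1 ≠ 0 := by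
      have : (((ν₁ - ν₃ + 2 - q):ℤ):ℂ) ≠ 0 := by
        exact_mod_cast (by omega : (ν₁ - ν₃ + 2 - q : ℤ) ≠ 0)
      push_cast at this ⊢; intro h; apply this; linear_combination h
    rw [← mul_div_assoc, ← mul_div_assoc, div_eq_div_iff
      (mul_ne_zero (mul_ne_zero (mul_ne_zero (div_ne_zero hw two_ne_zero) g2)
        (mul_ne_zero (mul_ne_zero c1 c2) f1)) f2)
      (mul_ne_zero (mul_ne_zero g2 f1) (mul_ne_zero (mul_ne_zero c3 c4) f2))]
    push_cast
    ring
  · rw [if_neg (by tauto), if_neg (by omega), mul_zero, mul_zero]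

lemma stepW1 (ν₁ ν₂ ν₃ : ℤ) (h21 : ν₁ < ν₂) (h13 : ν₃ < ν₁) (q : ℤ)
    (hq1 : -(ν₁-ν₃+1)+2 ≤ q) (hq2 : q ≤ ν₁-ν₃+1) :
    ((ν₁:ℂ)-ν₃+1+q) * ((ν₁:ℂ)-ν₃+q) * ((ν₂:ℂ)-ν₁+q-1) * solW1 ν₁ ν₂ ν₃ q
      = ((ν₁:ℂ)-ν₃+3-q) * ((ν₁:ℂ)-ν₃+2-q) * ((q:ℂ)-1-ν₂+ν₁) * solW1 ν₁ ν₂ ν₃ (q-2) := by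
  by_cases hp : (q - (ν₁ - ν₂ + 1)) % 2 = 0
  · rcases (by omega :
        q ≤ -(ν₂-ν₁)-1 ∨ q = 1-(ν₂-ν₁) ∨ (3-(ν₂-ν₁) ≤ q ∧ q ≤ ν₂-ν₁-1) ∨
        q = ν₂-ν₁+1 ∨ ν₂-ν₁+3 ≤ q) with h | h | h | h | h
    · rw [w1_lo _ _ _ q (by omega), w1_lo _ _ _ (q-2) (by omega)]
      simp
    · rw [w1_lo _ _ _ (q-2) (by omega)]
      have hc : ((q:ℤ):ℂ) = ((1 - (ν₂ - ν₁) : ℤ):ℂ) := by rw [h]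
      push_cast at hc
      rw [mul_zero]
      linear_combination (((ν₁:ℂ)-ν₃+1+q) * ((ν₁:ℂ)-ν₃+q) * solW1 ν₁ ν₂ ν₃ q) * hc
    · unfold solW1
      rw [if_pos ⟨abs_le.mpr ⟨by omega, by omega⟩, hp⟩,
          if_pos ⟨abs_le.mpr ⟨by omega, by omega⟩, by omega⟩]
      have e1 : Complex.Gamma (((ν₂ - ν₁ + 1 - (q-2) : ℤ) : ℂ) / 2)
          = (((ν₂ - ν₁ + 1 - q : ℤ):ℂ)/2) * Complex.Gamma (((ν₂ - ν₁ + 1 - q : ℤ) : ℂ) / 2) := by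
        rw [show (ν₂ - ν₁ + 1 - (q-2) : ℤ) = (ν₂ - ν₁ + 1 - q) + 2 from by ring]
        exact gamma_step _ (by omega)
      have e2 : Complex.Gamma (((ν₂ - ν₁ + 1 + q : ℤ) : ℂ) / 2)
          = (((ν₂ - ν₁ + 1 + (q-2) : ℤ):ℂ)/2) * Complex.Gamma (((ν₂ - ν₁ + 1 + (q-2) : ℤ) : ℂ) / 2) := by
        rw [show (ν₂ - ν₁ + 1 + q : ℤ) = (ν₂ - ν₁ + 1 + (q-2)) + 2 from by ring]
        exact gamma_step _ (by omega)
      have e3 : ((Nat.factorial (ν₁ - ν₃ + 1 + q).toNat : ℕ) : ℂ)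
          = (((ν₁ - ν₃ + 1 + (q-2)):ℂ)+2)*(((ν₁ - ν₃ + 1 + (q-2)):ℂ)+1)
            *(Nat.factorial (ν₁ - ν₃ + 1 + (q-2)).toNat : ℂ) := by
        rw [show (ν₁ - ν₃ + 1 + q : ℤ) = (ν₁ - ν₃ + 1 + (q-2)) + 2 from by ring]
        have := fact_cast_step (ν₁ - ν₃ + 1 + (q-2)) (by omega)
        rw [this]; push_cast; ring
      have e4 : ((Nat.factorial (ν₁ - ν₃ + 1 - (q-2)).toNat : ℕ) : ℂ)
          = (((ν₁ - ν₃ + 1 - q):ℂ)+2)*(((ν₁ - ν₃ + 1 - q):ℂ)+1)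
            *(Nat.factorial (ν₁ - ν₃ + 1 - q).toNat : ℂ) := by
        rw [show (ν₁ - ν₃ + 1 - (q-2) : ℤ) = (ν₁ - ν₃ + 1 - q) + 2 from by ring]
        have := fact_cast_step (ν₁ - ν₃ + 1 - q) (by omega)
        rw [this]; push_cast; ring
      have es : ((q - (ν₁ - ν₂ + 1) % 2) / 2 : ℤ) = (q - 2 - (ν₁ - ν₂ + 1) % 2) / 2 + 1 := by
        omega
      rw [e1, e2, e3, e4, es, zpow_add₀ (by norm_num : (-1:ℂ) ≠ 0), zpow_one]
      have g1 : Complex.Gamma (((ν₂ - ν₁ + 1 - q : ℤ) : ℂ) / 2) ≠ 0 :=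
        gamma_half_even_ne_zero _ (by omega) (by omega)
      have g2 : Complex.Gamma (((ν₂ - ν₁ + 1 + (q-2) : ℤ) : ℂ) / 2) ≠ 0 :=
        gamma_half_even_ne_zero _ (by omega) (by omega)
      have hz : (((ν₂ - ν₁ + 1 - q : ℤ):ℂ))/2 ≠ 0 := by
        apply div_ne_zero _ two_ne_zero
        exact_mod_cast (by omega : (ν₂ - ν₁ + 1 - q : ℤ) ≠ 0)
      have hw : (((ν₂ - ν₁ + 1 + (q-2) : ℤ):ℂ))/2 ≠ 0 := by
        apply div_ne_zero _ two_ne_zero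
        exact_mod_cast (by omega : (ν₂ - ν₁ + 1 + (q-2) : ℤ) ≠ 0)
      have f1 : ((Nat.factorial (ν₁ - ν₃ + 1 + (q-2)).toNat : ℕ) : ℂ) ≠ 0 :=
        Nat.cast_ne_zero.mpr (Nat.factorial_ne_zero _)
      have f2 : ((Nat.factorial (ν₁ - ν₃ + 1 - q).toNat : ℕ) : ℂ) ≠ 0 :=
        Nat.cast_ne_zero.mpr (Nat.factorial_ne_zero _)
      have c1 : ((ν₁:ℂ) - ν₃ + 1 + (q-2)) + 2 ≠ 0 := by
        have : (((ν₁ - ν₃ + 1 + q):ℤ):ℂ) ≠ 0 := by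
          exact_mod_cast (by omega : (ν₁ - ν₃ + 1 + q : ℤ) ≠ 0)
        push_cast at this ⊢; intro hh; apply this; linear_combination hh
      have c2 : ((ν₁:ℂ) - ν₃ + 1 + (q-2)) + 1 ≠ 0 := by
        have : (((ν₁ - ν₃ + q):ℤ):ℂ) ≠ 0 := by
          exact_mod_cast (by omega : (ν₁ - ν₃ + q : ℤ) ≠ 0)
        push_cast at this ⊢; intro hh; apply this; linear_combination hh
      have c3 : ((ν₁:ℂ) - ν₃ + 1 - q) + 2 ≠ 0 := by
        have : (((ν₁ - ν₃ + 3 - q):ℤ):ℂ) ≠ 0 := by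
          exact_mod_cast (by omega : (ν₁ - ν₃ + 3 - q : ℤ) ≠ 0)
        push_cast at this ⊢; intro hh; apply this; linear_combination hh
      have c4 : ((ν₁:ℂ) - ν₃ + 1 - q) + 1 ≠ 0 := by
        have : (((ν₁ - ν₃ + 2 - q):ℤ):ℂ) ≠ 0 := by
          exact_mod_cast (by omega : (ν₁ - ν₃ + 2 - q : ℤ) ≠ 0)
        push_cast at this ⊢; intro hh; apply this; linear_combination hh
      rw [← mul_div_assoc, ← mul_div_assoc, div_eq_div_iff
        (mul_ne_zero (mul_ne_zero (mul_ne_zero g1 (mul_ne_zero hw g2))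
          (mul_ne_zero (mul_ne_zero c1 c2) f1)) f2)
        (mul_ne_zero (mul_ne_zero (mul_ne_zero (mul_ne_zero hz g1) g2) f1)
          (mul_ne_zero (mul_ne_zero c3 c4) f2))]
      push_cast
      ring
    · rw [w1_hi _ _ _ q (by omega)]
      have hc : ((q:ℤ):ℂ) = ((ν₂ - ν₁ + 1 : ℤ):ℂ) := by rw [h]
      push_cast at hc
      rw [mul_zero]
      linear_combination (-(((ν₁:ℂ)-ν₃+3-q) * ((ν₁:ℂ)-ν₃+2-q) * solW1 ν₁ ν₂ ν₃ (q-2))) * hc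
    · rw [w1_hi _ _ _ q (by omega), w1_hi _ _ _ (q-2) (by omega)]
      simp
  · unfold solW1
    rw [if_neg (by tauto), if_neg (by omega), mul_zero, mul_zero]

/- ### A step recurrence implies being a solution -/

lemma isSol_of_step (ν₁ ν₂ ν₃ : ℤ) (c : ℤ → ℂ)
    (hvan : ∀ q : ℤ, ν₁ - ν₃ + 1 < |q| → c q = 0)
    (hstep : ∀ q : ℤ, -(ν₁-ν₃+1)+2 ≤ q → q ≤ ν₁-ν₃+1 →
      ((ν₁:ℂ)-ν₃+1+q) * ((ν₁:ℂ)-ν₃+q) * ((ν₂:ℂ)-ν₁+q-1) * c q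
        = ((ν₁:ℂ)-ν₃+3-q) * ((ν₁:ℂ)-ν₃+2-q) * ((q:ℂ)-1-ν₂+ν₁) * c (q-2)) :
    IsSolS (ν₁ - ν₃ + 1) (ν₁ : ℂ) (ν₂ : ℂ) (ν₃ : ℂ) c := by
  refine ⟨hvan, ?_, ?_⟩
  · intro q h1 h2
    have h := hstep q (by omega) (by omega)
    push_cast
    linear_combination -h
  · intro q h1 h2
    have h := hstep (q+2) (by omega) (by omega)
    rw [show q+2-2 = q from by ring] at h
    push_cast at h ⊢
    linear_combination h

lemma uniqS (ν₁ ν₂ ν₃ : ℤ) (h21 : ν₁ < ν₂) (h13 : ν₃ < ν₁) (c : ℤ → ℂ)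
    (hc : IsSolS (ν₁ - ν₃ + 1) (ν₁ : ℂ) (ν₂ : ℂ) (ν₃ : ℂ) c)
    (h0 : c (ν₁ - ν₃ + 1 - (ν₁ - ν₃ + 1 + ν₂ - ν₁) % 2) = 0)
    (h1 : c (min (ν₁ - ν₃ + 1 - (ν₁ - ν₃ + 1 + ν₂ - ν₁ + 1) % 2) (ν₂ - ν₁ - 1)) = 0) :
    ∀ q : ℤ, c q = 0 := by
  have E1' : ∀ r : ℤ, -(ν₁-ν₃+1)+2 ≤ r → r ≤ (ν₁-ν₃+1)-1 →
      (((ν₁-ν₃+1-r+2)*(ν₁-ν₃+1-r+1)*(ν₁-ν₂+r-1) : ℤ) : ℂ) * c (r-2)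
        = (((ν₁-ν₃+1+r)*(ν₁-ν₃+1+r-1)*(ν₂-ν₁+r-1) : ℤ) : ℂ) * c r := by
    intro r hr1 hr2
    have h := hc.2.1 r (by omega) (by omega)
    push_cast
    push_cast at h
    linear_combination h
  have E2' : ∀ r : ℤ, -(ν₁-ν₃+1)+1 ≤ r → r ≤ (ν₁-ν₃+1)-2 →
      (((ν₁-ν₃+1-r)*(ν₁-ν₃+1-r-1)*(ν₂-ν₁-r-1) : ℤ) : ℂ) * c r
        = (((ν₁-ν₃+1+r+2)*(ν₁-ν₃+1+r+1)*(ν₁-ν₂-r-1) : ℤ) : ℂ) * c (r+2) := by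
    intro r hr1 hr2
    have h := hc.2.2 r (by omega) (by omega)
    push_cast
    push_cast at h
    linear_combination h
  have tailU : ∀ n : ℕ, c (ν₂ - ν₁ + 1 + 2*(n:ℤ)) = 0 := by
    intro n
    induction n using Nat.strong_induction_on with
    | _ n ih =>
      by_cases hq : ν₁ - ν₃ + 1 < ν₂ - ν₁ + 1 + 2*(n:ℤ)
      · exact hc.1 _ (by rw [abs_of_nonneg (by omega)]; omega)
      · have h := E2' (ν₂ - ν₁ - 1 + 2*(n:ℤ)) (by omega) (by omega)
        rw [show ν₂ - ν₁ - 1 + 2*(n:ℤ) + 2 = ν₂ - ν₁ + 1 + 2*(n:ℤ) from by ring] at h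
        have hAz : (((ν₁-ν₃+1-(ν₂ - ν₁ - 1 + 2*(n:ℤ)))*(ν₁-ν₃+1-(ν₂ - ν₁ - 1 + 2*(n:ℤ))-1)
            *(ν₂-ν₁-(ν₂ - ν₁ - 1 + 2*(n:ℤ))-1) : ℤ) : ℂ) * c (ν₂ - ν₁ - 1 + 2*(n:ℤ)) = 0 := by
          rcases n with _ | n'
          · rw [show (ν₂-ν₁-(ν₂ - ν₁ - 1 + 2*((0:ℕ):ℤ))-1 : ℤ) = 0 from by push_cast; ring]
            norm_num
          · rw [show (ν₂ - ν₁ - 1 + 2*((n'+1:ℕ):ℤ) : ℤ) = ν₂ - ν₁ + 1 + 2*(n':ℤ) from by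
              push_cast; ring]
            rw [ih n' (by omega)]
            ring
        have hB := h.symm.trans hAz
        refine ezero _ _ ?_ hB
        refine mul_ne_zero (mul_ne_zero ?_ ?_) ?_ <;> omega
  have tailD : ∀ n : ℕ, c (-(ν₂ - ν₁) - 1 - 2*(n:ℤ)) = 0 := by
    intro n
    induction n using Nat.strong_induction_on with
    | _ n ih =>
      by_cases hq : ν₁ - ν₃ + 1 < -(-(ν₂ - ν₁) - 1 - 2*(n:ℤ))
      · exact hc.1 _ (by rw [abs_of_nonpos (by omega)]; omega)
      · have h := E1' (-(ν₂ - ν₁) + 1 - 2*(n:ℤ)) (by omega) (by omega)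
        rw [show -(ν₂ - ν₁) + 1 - 2*(n:ℤ) - 2 = -(ν₂ - ν₁) - 1 - 2*(n:ℤ) from by ring] at h
        have hAz : (((ν₁-ν₃+1+(-(ν₂ - ν₁) + 1 - 2*(n:ℤ)))*(ν₁-ν₃+1+(-(ν₂ - ν₁) + 1 - 2*(n:ℤ))-1)
            *(ν₂-ν₁+(-(ν₂ - ν₁) + 1 - 2*(n:ℤ))-1) : ℤ) : ℂ) * c (-(ν₂ - ν₁) + 1 - 2*(n:ℤ)) = 0 := by
          rcases n with _ | n'
          · rw [show (ν₂-ν₁+(-(ν₂ - ν₁) + 1 - 2*((0:ℕ):ℤ))-1 : ℤ) = 0 from by push_cast; ring]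
            norm_num
          · rw [show (-(ν₂ - ν₁) + 1 - 2*((n'+1:ℕ):ℤ) : ℤ) = -(ν₂ - ν₁) - 1 - 2*(n':ℤ) from by
              push_cast; ring]
            rw [ih n' (by omega)]
            ring
        have hB := h.trans hAz
        refine ezero _ _ ?_ hB
        refine mul_ne_zero (mul_ne_zero ?_ ?_) ?_ <;> omega
  have mid : ∀ t : ℤ, t ≤ ν₁-ν₃+1 → c t = 0 →
      (∀ k : ℕ, ν₂-ν₁-1 ≠ t - 2*((k:ℤ)+1)) → ∀ n : ℕ, c (t - 2*(n:ℤ)) = 0 := by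
    intro t ht h0t hdeg n
    induction n using Nat.strong_induction_on with
    | _ n ih =>
      rcases n with _ | n'
      · simpa using h0t
      · set q : ℤ := t - 2*((n'+1:ℕ):ℤ) with hqdef
        have hqe : q = t - 2*(n':ℤ) - 2 := by rw [hqdef]; push_cast; ring
        by_cases hlow : q < -(ν₁-ν₃+1)
        · exact hc.1 _ (by rw [abs_of_nonpos (by omega)]; omega)
        · by_cases hbot : q = -(ν₁-ν₃+1)
          · have h := E1' (q+2) (by omega) (by omega)
            rw [show q+2-2 = q from by ring] at h
            rw [show q + 2 = t - 2*(n':ℤ) from by omega, ih n' (by omega), mul_zero] at h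
            refine ezero _ _ ?_ h
            refine mul_ne_zero (mul_ne_zero ?_ ?_) ?_ <;> omega
          · have h := E2' q (by omega) (by omega)
            rw [show q + 2 = t - 2*(n':ℤ) from by omega, ih n' (by omega), mul_zero] at h
            have hd := hdeg n'
            refine ezero _ _ ?_ h
            refine mul_ne_zero (mul_ne_zero ?_ ?_) ?_ <;> omega
  intro q
  by_cases hq : ν₁ - ν₃ + 1 < |q|
  · exact hc.1 q hq
  · rw [not_lt, abs_le] at hq
    by_cases hp : (q - (ν₁ - ν₂)) % 2 = 0
    · have := mid (ν₁ - ν₃ + 1 - (ν₁ - ν₃ + 1 + ν₂ - ν₁) % 2) (by omega) h0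
        (by intro k; omega) ((ν₁ - ν₃ + 1 - (ν₁ - ν₃ + 1 + ν₂ - ν₁) % 2 - q)/2).toNat
      rw [show ν₁ - ν₃ + 1 - (ν₁ - ν₃ + 1 + ν₂ - ν₁) % 2
          - 2*(((ν₁ - ν₃ + 1 - (ν₁ - ν₃ + 1 + ν₂ - ν₁) % 2 - q)/2).toNat : ℤ) = q from by omega] at this
      exact this
    · by_cases hhi : ν₂ - ν₁ + 1 ≤ q
      · have := tailU ((q - (ν₂ - ν₁ + 1))/2).toNat
        rw [show ν₂ - ν₁ + 1 + 2*(((q - (ν₂ - ν₁ + 1))/2).toNat : ℤ) = q from by omega] at this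
        exact this
      · by_cases hlo : q ≤ -(ν₂ - ν₁) - 1
        · have := tailD ((-(ν₂ - ν₁) - 1 - q)/2).toNat
          rw [show -(ν₂ - ν₁) - 1 - 2*(((-(ν₂ - ν₁) - 1 - q)/2).toNat : ℤ) = q from by omega] at this
          exact this
        · set t1 : ℤ := min (ν₁ - ν₃ + 1 - (ν₁ - ν₃ + 1 + ν₂ - ν₁ + 1) % 2) (ν₂ - ν₁ - 1) with ht1
          have := mid t1 (by omega) h1 (by intro k; omega) ((t1 - q)/2).toNat
          rw [show t1 - 2*(((t1 - q)/2).toNat : ℤ) = q from by omega] at this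
          exact this

/- ### Anchor values -/

lemma w0_t0_ne (ν₁ ν₂ ν₃ : ℤ) (h21 : ν₁ < ν₂) (h13 : ν₃ < ν₁) :
    solW0 ν₁ ν₂ ν₃ (ν₁ - ν₃ + 1 - (ν₁ - ν₃ + 1 + ν₂ - ν₁) % 2) ≠ 0 := by
  unfold solW0
  rw [if_pos ⟨abs_le.mpr ⟨by omega, by omega⟩, by omega⟩]
  exact div_ne_zero (gamma_half_odd_ne_zero _ (by omega))
    (mul_ne_zero (mul_ne_zero (gamma_half_odd_ne_zero _ (by omega))
      (Nat.cast_ne_zero.mpr (Nat.factorial_ne_zero _)))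
      (Nat.cast_ne_zero.mpr (Nat.factorial_ne_zero _)))

lemma w1_t0_eq (ν₁ ν₂ ν₃ : ℤ) :
    solW1 ν₁ ν₂ ν₃ (ν₁ - ν₃ + 1 - (ν₁ - ν₃ + 1 + ν₂ - ν₁) % 2) = 0 := by
  unfold solW1
  rw [if_neg (by rintro ⟨h1', h2'⟩; omega)]

lemma w1_t1_ne (ν₁ ν₂ ν₃ : ℤ) (h21 : ν₁ < ν₂) (h13 : ν₃ < ν₁) :
    solW1 ν₁ ν₂ ν₃ (min (ν₁ - ν₃ + 1 - (ν₁ - ν₃ + 1 + ν₂ - ν₁ + 1) % 2) (ν₂ - ν₁ - 1)) ≠ 0 := by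
  unfold solW1
  rw [if_pos ⟨abs_le.mpr ⟨by omega, by omega⟩, by omega⟩]
  exact div_ne_zero (zpow_ne_zero _ (by norm_num : (-1:ℂ) ≠ 0))
    (mul_ne_zero (mul_ne_zero (mul_ne_zero
      (gamma_half_even_ne_zero _ (by omega) (by omega))
      (gamma_half_even_ne_zero _ (by omega) (by omega)))
      (Nat.cast_ne_zero.mpr (Nat.factorial_ne_zero _)))
      (Nat.cast_ne_zero.mpr (Nat.factorial_ne_zero _)))

lemma w0_t1_eq (ν₁ ν₂ ν₃ : ℤ) :
    solW0 ν₁ ν₂ ν₃ (min (ν₁ - ν₃ + 1 - (ν₁ - ν₃ + 1 + ν₂ - ν₁ + 1) % 2) (ν₂ - ν₁ - 1)) = 0 := by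
  unfold solW0
  rw [if_neg (by rintro ⟨h1', h2'⟩; omega)]

/- ### Main theorem -/

/-- If `ν₂ > ν₁ > ν₃` are integers and `λ = ν₁ − ν₃ + 1`, then the solution space of
`S(λ,ν)` is the span of the two functions `w₀` and `w₁`. -/
theorem solutions_of_S_when_lam_eq_nu1_sub_nu3_add_one_nondominant
    (ν₁ ν₂ ν₃ : ℤ) (h21 : ν₁ < ν₂) (h13 : ν₃ < ν₁) :
    {c : ℤ → ℂ | IsSolS (ν₁ - ν₃ + 1) (ν₁ : ℂ) (ν₂ : ℂ) (ν₃ : ℂ) c}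
      = (Submodule.span ℂ {solW0 ν₁ ν₂ ν₃, solW1 ν₁ ν₂ ν₃} : Set (ℤ → ℂ)) := by
  have hw0 : IsSolS (ν₁ - ν₃ + 1) (ν₁ : ℂ) (ν₂ : ℂ) (ν₃ : ℂ) (solW0 ν₁ ν₂ ν₃) :=
    isSol_of_step _ _ _ _ (w0_vanish _ _ _) (stepW0 _ _ _ h13)
  have hw1 : IsSolS (ν₁ - ν₃ + 1) (ν₁ : ℂ) (ν₂ : ℂ) (ν₃ : ℂ) (solW1 ν₁ ν₂ ν₃) :=
    isSol_of_step _ _ _ _ (w1_vanish _ _ _) (stepW1 _ _ _ h21 h13)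
  ext c
  simp only [Set.mem_setOf_eq, SetLike.mem_coe, Submodule.mem_span_pair]
  constructor
  · intro hc
    refine ⟨c (ν₁ - ν₃ + 1 - (ν₁ - ν₃ + 1 + ν₂ - ν₁) % 2) / solW0 ν₁ ν₂ ν₃ (ν₁ - ν₃ + 1 - (ν₁ - ν₃ + 1 + ν₂ - ν₁) % 2),
      c (min (ν₁ - ν₃ + 1 - (ν₁ - ν₃ + 1 + ν₂ - ν₁ + 1) % 2) (ν₂ - ν₁ - 1)) / solW1 ν₁ ν₂ ν₃ (min (ν₁ - ν₃ + 1 - (ν₁ - ν₃ + 1 + ν₂ - ν₁ + 1) % 2) (ν₂ - ν₁ - 1)), ?_⟩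
    set α := c (ν₁ - ν₃ + 1 - (ν₁ - ν₃ + 1 + ν₂ - ν₁) % 2) / solW0 ν₁ ν₂ ν₃ (ν₁ - ν₃ + 1 - (ν₁ - ν₃ + 1 + ν₂ - ν₁) % 2) with hα
    set β := c (min (ν₁ - ν₃ + 1 - (ν₁ - ν₃ + 1 + ν₂ - ν₁ + 1) % 2) (ν₂ - ν₁ - 1)) / solW1 ν₁ ν₂ ν₃ (min (ν₁ - ν₃ + 1 - (ν₁ - ν₃ + 1 + ν₂ - ν₁ + 1) % 2) (ν₂ - ν₁ - 1)) with hβ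
    have hd : IsSolS (ν₁ - ν₃ + 1) (ν₁ : ℂ) (ν₂ : ℂ) (ν₃ : ℂ)
        (fun q => c q - α * solW0 ν₁ ν₂ ν₃ q - β * solW1 ν₁ ν₂ ν₃ q) := by
      refine ⟨?_, ?_, ?_⟩
      · intro q h
        simp only
        rw [hc.1 q h, w0_vanish _ _ _ q h, w1_vanish _ _ _ q h]
        ring
      · intro q hq1 hq2
        simp only
        linear_combination hc.2.1 q hq1 hq2 - α * hw0.2.1 q hq1 hq2 - β * hw1.2.1 q hq1 hq2
      · intro q hq1 hq2
        simp only
        linear_combination hc.2.2 q hq1 hq2 - α * hw0.2.2 q hq1 hq2 - β * hw1.2.2 q hq1 hq2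
    have hd0 : (fun q => c q - α * solW0 ν₁ ν₂ ν₃ q - β * solW1 ν₁ ν₂ ν₃ q)
        (ν₁ - ν₃ + 1 - (ν₁ - ν₃ + 1 + ν₂ - ν₁) % 2) = 0 := by
      simp only
      rw [w1_t0_eq, mul_zero, hα, div_mul_cancel₀ _ (w0_t0_ne _ _ _ h21 h13)]
      ring
    have hd1 : (fun q => c q - α * solW0 ν₁ ν₂ ν₃ q - β * solW1 ν₁ ν₂ ν₃ q)
        (min (ν₁ - ν₃ + 1 - (ν₁ - ν₃ + 1 + ν₂ - ν₁ + 1) % 2) (ν₂ - ν₁ - 1)) = 0 := by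
      simp only
      rw [w0_t1_eq, mul_zero, hβ, div_mul_cancel₀ _ (w1_t1_ne _ _ _ h21 h13)]
      ring
    have huniq := uniqS ν₁ ν₂ ν₃ h21 h13 _ hd hd0 hd1
    funext q
    have hz := huniq q
    simp only [Pi.add_apply, Pi.smul_apply, smul_eq_mul]
    linear_combination -hz
  · rintro ⟨a, b, rfl⟩
    apply isSol_of_step
    · intro q h
      simp only [Pi.add_apply, Pi.smul_apply, smul_eq_mul]
      rw [w0_vanish _ _ _ q h, w1_vanish _ _ _ q h]
      ring
    · intro q hq1 hq2
      simp only [Pi.add_apply, Pi.smul_apply, smul_eq_mul]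
      linear_combination a * stepW0 ν₁ ν₂ ν₃ h13 q hq1 hq2 + b * stepW1 ν₁ ν₂ ν₃ h21 h13 q hq1 hq2
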